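/- Let ν be a Young diagram, α an addable corner of ν with content c(α), and λ = ν ∪ {α}. Then in the field of rational functions ℚ(u) one has the identity ∏_{a ∈ A(λ)} (u − c(a)) / ∏_{b ∈ R(λ)} (u − c(b)) = ((u − c(α) − 1)(u − c(α) + 1)/(u − c(α))²) · ∏_{a ∈ A(ν)} (u − c(a)) / ∏_{b ∈ R(ν)} (u − c(b)), where A(·) and R(·) denote the sets of addable and removable corners. -/

import Mathlib

/-- A cell `c` is an addable corner of the Young diagram `μ` if `c ∉ μ` and
adding `c` to `μ` again yields a Young diagram (i.e. a finite lower set). -/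
def YoungDiagram.IsAddableCorner (μ : YoungDiagram) (c : ℕ × ℕ) : Prop :=
  c ∉ μ ∧ IsLowerSet (↑(insert c μ.cells) : Set (ℕ × ℕ))

/-- A cell `c` is a removable corner of the Young diagram `μ` if `c ∈ μ` and
removing `c` from `μ` again yields a Young diagram. -/
def YoungDiagram.IsRemovableCorner (μ : YoungDiagram) (c : ℕ × ℕ) : Prop :=
  c ∈ μ ∧ IsLowerSet (↑(μ.cells.erase c) : Set (ℕ × ℕ))

/-- The content of the cell `(i, j)` is `j - i`. -/
def cellContent (c : ℕ × ℕ) : ℤ := (c.2 : ℤ) - (c.1 : ℤ)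

private lemma yd_addable_iff (μ : YoungDiagram) (c : ℕ × ℕ) :
    μ.IsAddableCorner c ↔ c ∉ μ ∧ ∀ p : ℕ × ℕ, p ≤ c → p ≠ c → p ∈ μ := by
  constructor
  · rintro ⟨h1, h2⟩
    refine ⟨h1, fun p hp hne => ?_⟩
    have hc : c ∈ (↑(insert c μ.cells) : Set (ℕ × ℕ)) := by simp
    have hmem := h2 hp hc
    simp only [Finset.coe_insert, Set.mem_insert_iff, Finset.mem_coe,
      YoungDiagram.mem_cells] at hmem
    tauto
  · rintro ⟨h1, h2⟩
    refine ⟨h1, ?_⟩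
    intro x y hyx hx
    simp only [Finset.coe_insert, Set.mem_insert_iff, Finset.mem_coe,
      YoungDiagram.mem_cells] at hx ⊢
    rcases hx with h | hx
    · subst h
      by_cases hyc : y = x
      · exact Or.inl hyc
      · exact Or.inr (h2 y hyx hyc)
    · exact Or.inr (μ.up_left_mem hyx.1 hyx.2 hx)

private lemma yd_removable_iff (μ : YoungDiagram) (c : ℕ × ℕ) :
    μ.IsRemovableCorner c ↔ c ∈ μ ∧ (c.1 + 1, c.2) ∉ μ ∧ (c.1, c.2 + 1) ∉ μ := by
  constructor
  · rintro ⟨h1, h2⟩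
    refine ⟨h1, fun hmem => ?_, fun hmem => ?_⟩
    · have h3 : ((c.1 + 1, c.2) : ℕ × ℕ) ∈ (↑(μ.cells.erase c) : Set (ℕ × ℕ)) := by
        rw [Finset.mem_coe, Finset.mem_erase]
        refine ⟨fun h => ?_, hmem⟩
        have := congrArg Prod.fst h
        simp only at this
        omega
      have h4 := h2 (show c ≤ (c.1 + 1, c.2) from ⟨Nat.le_succ _, le_rfl⟩) h3
      rw [Finset.mem_coe, Finset.mem_erase] at h4
      exact h4.1 rfl
    · have h3 : ((c.1, c.2 + 1) : ℕ × ℕ) ∈ (↑(μ.cells.erase c) : Set (ℕ × ℕ)) := by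
        rw [Finset.mem_coe, Finset.mem_erase]
        refine ⟨fun h => ?_, hmem⟩
        have := congrArg Prod.snd h
        simp only at this
        omega
      have h4 := h2 (show c ≤ (c.1, c.2 + 1) from ⟨le_rfl, Nat.le_succ _⟩) h3
      rw [Finset.mem_coe, Finset.mem_erase] at h4
      exact h4.1 rfl
  · rintro ⟨h1, h2, h3⟩
    refine ⟨h1, ?_⟩
    intro x y hyx hx
    rw [Finset.mem_coe, Finset.mem_erase] at hx ⊢
    obtain ⟨hx1, hx2⟩ := hx
    have hy1 : y.1 ≤ x.1 := hyx.1
    have hy2 : y.2 ≤ x.2 := hyx.2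
    refine ⟨?_, μ.up_left_mem hy1 hy2 hx2⟩
    intro hyc
    rw [hyc] at hy1 hy2
    have hne : c.1 ≠ x.1 ∨ c.2 ≠ x.2 := by
      by_contra h
      push_neg at h
      exact hx1 (Prod.ext h.1.symm h.2.symm)
    rcases hne with h | h
    · exact h2 (μ.up_left_mem (show c.1 + 1 ≤ x.1 by omega) hy2 hx2)
    · exact h3 (μ.up_left_mem hy1 (show c.2 + 1 ≤ x.2 by omega) hx2)

private lemma yd_addable_finite (μ : YoungDiagram) : {c | μ.IsAddableCorner c}.Finite := by
  have h : {c | μ.IsAddableCorner c} ⊆ Set.Iic (μ.cells.card, μ.cells.card) := by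
    rintro ⟨a, b⟩ hab
    rw [Set.mem_setOf_eq, yd_addable_iff] at hab
    obtain ⟨-, h2⟩ := hab
    have ha : a ≤ μ.cells.card := by
      have hcard : (Finset.range a).card ≤ μ.cells.card := by
        apply Finset.card_le_card_of_injOn (fun k => (k, b))
        · intro k hk
          rw [Finset.mem_coe, Finset.mem_range] at hk
          exact h2 (k, b) (Prod.mk_le_mk.mpr ⟨le_of_lt hk, le_rfl⟩)
            (fun h => by
              have := congrArg Prod.fst h
              simp only at this
              omega)
        · intro x _ y _ hxy
          exact congrArg Prod.fst hxy
      simpa using hcard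
    have hb : b ≤ μ.cells.card := by
      have hcard : (Finset.range b).card ≤ μ.cells.card := by
        apply Finset.card_le_card_of_injOn (fun k => (a, k))
        · intro k hk
          rw [Finset.mem_coe, Finset.mem_range] at hk
          exact h2 (a, k) (Prod.mk_le_mk.mpr ⟨le_rfl, le_of_lt hk⟩)
            (fun h => by
              have := congrArg Prod.snd h
              simp only at this
              omega)
        · intro x _ y _ hxy
          exact congrArg Prod.snd hxy
      simpa using hcard
    exact Set.mem_Iic.mpr (Prod.mk_le_mk.mpr ⟨ha, hb⟩)
  exact (Set.finite_Iic _).subset h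

private lemma yd_removable_finite (μ : YoungDiagram) : {c | μ.IsRemovableCorner c}.Finite := by
  apply Set.Finite.subset μ.cells.finite_toSet
  intro c hc
  exact hc.1

set_option maxHeartbeats 1000000 in
open RatFunc in
/-- If `λ = ν ∪ {α}` with `α` an addable corner of `ν`, then in `ℚ(u)`:
`∏_{a ∈ A(λ)} (u − c(a)) / ∏_{b ∈ R(λ)} (u − c(b)) =
 ((u − c(α) − 1)(u − c(α) + 1)/(u − c(α))²) ·
 ∏_{a ∈ A(ν)} (u − c(a)) / ∏_{b ∈ R(ν)} (u − c(b))`. -/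
theorem addable_removable_content_product_recursion
    (ν lam : YoungDiagram) (α : ℕ × ℕ) (hα : ν.IsAddableCorner α)
    (hlam : lam.cells = insert α ν.cells) :
    (∏ᶠ a ∈ {c | lam.IsAddableCorner c}, (X - (cellContent a : RatFunc ℚ))) /
        (∏ᶠ b ∈ {c | lam.IsRemovableCorner c}, (X - (cellContent b : RatFunc ℚ))) =
      ((X - (cellContent α : RatFunc ℚ) - 1) * (X - (cellContent α : RatFunc ℚ) + 1) /
          (X - (cellContent α : RatFunc ℚ)) ^ 2) *
        ((∏ᶠ a ∈ {c | ν.IsAddableCorner c}, (X - (cellContent a : RatFunc ℚ))) /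
          (∏ᶠ b ∈ {c | ν.IsRemovableCorner c}, (X - (cellContent b : RatFunc ℚ)))) := by
  classical
  obtain ⟨i, j⟩ := α
  have hαA : ν.IsAddableCorner (i, j) := hα
  rw [yd_addable_iff] at hα
  obtain ⟨hαν, hpred⟩ := hα
  -- nothing weakly above α is in ν
  have hno : ∀ p : ℕ × ℕ, (i, j) ≤ p → p ∉ ν := fun p hp hmem =>
    hαν (ν.up_left_mem hp.1 hp.2 hmem)
  have hmemlam : ∀ c : ℕ × ℕ, c ∈ lam ↔ c = (i, j) ∨ c ∈ ν := by
    intro c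
    rw [← YoungDiagram.mem_cells, hlam, Finset.mem_insert, YoungDiagram.mem_cells]
  have hXν : (i, j + 1) ∉ ν := hno _ (Prod.mk_le_mk.mpr ⟨le_rfl, Nat.le_succ _⟩)
  have hYν : (i + 1, j) ∉ ν := hno _ (Prod.mk_le_mk.mpr ⟨Nat.le_succ _, le_rfl⟩)
  have hXα : ((i, j + 1) : ℕ × ℕ) ≠ (i, j) := fun h => by
    have := congrArg Prod.snd h; simp only at this; omega
  have hYα : ((i + 1, j) : ℕ × ℕ) ≠ (i, j) := fun h => by
    have := congrArg Prod.fst h; simp only at this; omega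
  have hXlam : (i, j + 1) ∉ lam := by
    rw [hmemlam]
    rintro (h | h)
    · exact hXα h
    · exact hXν h
  have hYlam : (i + 1, j) ∉ lam := by
    rw [hmemlam]
    rintro (h | h)
    · exact hYα h
    · exact hYν h
  -- characterization of addable corners of lam
  have hAlam : ∀ c : ℕ × ℕ,
      lam.IsAddableCorner c ↔
        (ν.IsAddableCorner c ∧ c ≠ (i, j)) ∨
          ((i = 0 ∨ (i - 1, j + 1) ∈ ν) ∧ c = (i, j + 1)) ∨
          ((j = 0 ∨ (i + 1, j - 1) ∈ ν) ∧ c = (i + 1, j)) := by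
    intro c
    rw [yd_addable_iff, yd_addable_iff]
    constructor
    · rintro ⟨h1, h2⟩
      have hcα : c ≠ (i, j) := fun h => h1 ((hmemlam c).mpr (Or.inl h))
      by_cases hcX : c = (i, j + 1)
      · subst hcX
        refine Or.inr (Or.inl ⟨?_, rfl⟩)
        rcases Nat.eq_zero_or_pos i with hi | hi
        · exact Or.inl hi
        · refine Or.inr ?_
          have hp : ((i - 1, j + 1) : ℕ × ℕ) ∈ lam :=
            h2 (i - 1, j + 1) (Prod.mk_le_mk.mpr ⟨by omega, le_rfl⟩)
              (fun h => by
                have := congrArg Prod.fst h; simp only at this; omega)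
          rcases (hmemlam _).mp hp with h | h
          · exfalso
            have := congrArg Prod.snd h; simp only at this; omega
          · exact h
      · by_cases hcY : c = (i + 1, j)
        · subst hcY
          refine Or.inr (Or.inr ⟨?_, rfl⟩)
          rcases Nat.eq_zero_or_pos j with hj | hj
          · exact Or.inl hj
          · refine Or.inr ?_
            have hp : ((i + 1, j - 1) : ℕ × ℕ) ∈ lam :=
              h2 (i + 1, j - 1) (Prod.mk_le_mk.mpr ⟨le_rfl, by omega⟩)
                (fun h => by
                  have := congrArg Prod.snd h; simp only at this; omega)
            rcases (hmemlam _).mp hp with h | h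
            · exfalso
              have := congrArg Prod.fst h; simp only at this; omega
            · exact h
        · refine Or.inl ⟨⟨fun hcν => h1 ((hmemlam c).mpr (Or.inr hcν)), ?_⟩, hcα⟩
          intro p hp hne
          have hpl := h2 p hp hne
          rcases (hmemlam p).mp hpl with h | h
          · exfalso
            subst h
            have hp1 : i ≤ c.1 := hp.1
            have hp2 : j ≤ c.2 := hp.2
            have hcc : i ≠ c.1 ∨ j ≠ c.2 := by
              by_contra hcon
              push_neg at hcon
              exact hne (Prod.ext hcon.1 hcon.2)
            have hor : ((i, j + 1) : ℕ × ℕ) ≤ c ∨ ((i + 1, j) : ℕ × ℕ) ≤ c := by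
              rcases hcc with h | h
              · exact Or.inr ⟨show i + 1 ≤ c.1 by omega, hp2⟩
              · exact Or.inl ⟨hp1, show j + 1 ≤ c.2 by omega⟩
            rcases hor with h | h
            · exact hXlam (h2 _ h fun he => hcX he.symm)
            · exact hYlam (h2 _ h fun he => hcY he.symm)
          · exact h
    · rintro (⟨⟨h1, h2⟩, hne⟩ | ⟨hx, rfl⟩ | ⟨hy, rfl⟩)
      · refine ⟨?_, fun p hp hpne => ?_⟩
        · rw [hmemlam]
          rintro (h | h)
          · exact hne h
          · exact h1 h
        · exact (hmemlam p).mpr (Or.inr (h2 p hp hpne))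
      · refine ⟨hXlam, ?_⟩
        rintro ⟨p1, p2⟩ hp hpne
        have hp1 : p1 ≤ i := hp.1
        have hp2 : p2 ≤ j + 1 := hp.2
        rw [hmemlam]
        by_cases hb : p2 ≤ j
        · by_cases hpa : ((p1, p2) : ℕ × ℕ) = (i, j)
          · exact Or.inl hpa
          · exact Or.inr (hpred (p1, p2) (Prod.mk_le_mk.mpr ⟨hp1, hb⟩) hpa)
        · have hp2' : p2 = j + 1 := by omega
          have hp1' : p1 < i := by
            rcases Nat.lt_or_ge p1 i with h | h
            · exact h
            · exfalso
              exact hpne (Prod.ext (show p1 = i by omega) (show p2 = j + 1 by omega))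
          rcases hx with hi0 | hxν
          · omega
          · exact Or.inr (ν.up_left_mem (show p1 ≤ i - 1 by omega)
              (show p2 ≤ j + 1 by omega) hxν)
      · refine ⟨hYlam, ?_⟩
        rintro ⟨p1, p2⟩ hp hpne
        have hp1 : p1 ≤ i + 1 := hp.1
        have hp2 : p2 ≤ j := hp.2
        rw [hmemlam]
        by_cases ha : p1 ≤ i
        · by_cases hpa : ((p1, p2) : ℕ × ℕ) = (i, j)
          · exact Or.inl hpa
          · exact Or.inr (hpred (p1, p2) (Prod.mk_le_mk.mpr ⟨ha, hp2⟩) hpa)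
        · have hp1' : p1 = i + 1 := by omega
          have hp2' : p2 < j := by
            rcases Nat.lt_or_ge p2 j with h | h
            · exact h
            · exfalso
              exact hpne (Prod.ext (show p1 = i + 1 by omega) (show p2 = j by omega))
          rcases hy with hj0 | hyν
          · omega
          · exact Or.inr (ν.up_left_mem (show p1 ≤ i + 1 by omega)
              (show p2 ≤ j - 1 by omega) hyν)
  -- characterization of removable corners of lam
  have hRlam : ∀ c : ℕ × ℕ,
      lam.IsRemovableCorner c ↔
        c = (i, j) ∨ (ν.IsRemovableCorner c ∧ c ≠ (i - 1, j) ∧ c ≠ (i, j - 1)) := by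
    intro c
    rw [yd_removable_iff, yd_removable_iff]
    constructor
    · rintro ⟨h1, h2, h3⟩
      by_cases hcα : c = (i, j)
      · exact Or.inl hcα
      · have h1' : c ∈ ν := by
          rcases (hmemlam _).mp h1 with h | h
          · exact absurd h hcα
          · exact h
        refine Or.inr ⟨⟨h1', fun h => h2 ((hmemlam _).mpr (Or.inr h)),
          fun h => h3 ((hmemlam _).mpr (Or.inr h))⟩, ?_, ?_⟩
        · intro h
          have e1 : c.1 = i - 1 := congrArg Prod.fst h
          have e2 : c.2 = j := congrArg Prod.snd h
          by_cases hi : i = 0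
          · exact hcα (Prod.ext (show c.1 = i by omega) e2)
          · refine h2 ((hmemlam _).mpr (Or.inl (Prod.ext (show c.1 + 1 = i by omega) e2)))
        · intro h
          have e1 : c.1 = i := congrArg Prod.fst h
          have e2 : c.2 = j - 1 := congrArg Prod.snd h
          by_cases hj : j = 0
          · exact hcα (Prod.ext e1 (show c.2 = j by omega))
          · refine h3 ((hmemlam _).mpr (Or.inl (Prod.ext e1 (show c.2 + 1 = j by omega))))
    · rintro (rfl | ⟨⟨h1, h2, h3⟩, hU, hL⟩)
      · refine ⟨(hmemlam _).mpr (Or.inl rfl), ?_, ?_⟩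
        · rw [hmemlam]
          rintro (h | h)
          · exact hYα h
          · exact hYν h
        · rw [hmemlam]
          rintro (h | h)
          · exact hXα h
          · exact hXν h
      · refine ⟨(hmemlam _).mpr (Or.inr h1), ?_, ?_⟩
        · rw [hmemlam]
          rintro (h | h)
          · have e1 : c.1 + 1 = i := congrArg Prod.fst h
            have e2 : c.2 = j := congrArg Prod.snd h
            exact hU (Prod.ext (show c.1 = i - 1 by omega) e2)
          · exact h2 h
        · rw [hmemlam]
          rintro (h | h)
          · have e1 : c.1 = i := congrArg Prod.fst h
            have e2 : c.2 + 1 = j := congrArg Prod.snd h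
            exact hL (Prod.ext e1 (show c.2 = j - 1 by omega))
          · exact h3 h
  -- the upper / left neighbours of α
  have hU : ν.IsRemovableCorner (i - 1, j) ↔ ¬(i = 0 ∨ (i - 1, j + 1) ∈ ν) := by
    rw [yd_removable_iff]
    push_neg
    constructor
    · rintro ⟨h1, h2, h3⟩
      have hi : i ≠ 0 := by
        rintro rfl
        exact hαν h1
      exact ⟨hi, h3⟩
    · rintro ⟨hi, hx⟩
      refine ⟨hpred (i - 1, j) (Prod.mk_le_mk.mpr ⟨by omega, le_rfl⟩)
        (fun h => by
          have := congrArg Prod.fst h; simp only at this; omega), ?_, hx⟩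
      show ((i - 1 + 1, j) : ℕ × ℕ) ∉ ν
      rw [show ((i - 1 + 1, j) : ℕ × ℕ) = (i, j) from Prod.ext (show i - 1 + 1 = i by omega) rfl]
      exact hαν
  have hL : ν.IsRemovableCorner (i, j - 1) ↔ ¬(j = 0 ∨ (i + 1, j - 1) ∈ ν) := by
    rw [yd_removable_iff]
    push_neg
    constructor
    · rintro ⟨h1, h2, h3⟩
      have hj : j ≠ 0 := by
        rintro rfl
        exact hαν h1
      exact ⟨hj, h2⟩
    · rintro ⟨hj, hy⟩
      refine ⟨hpred (i, j - 1) (Prod.mk_le_mk.mpr ⟨le_rfl, by omega⟩)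
        (fun h => by
          have := congrArg Prod.snd h; simp only at this; omega), hy, ?_⟩
      show ((i, j - 1 + 1) : ℕ × ℕ) ∉ ν
      rw [show ((i, j - 1 + 1) : ℕ × ℕ) = (i, j) from Prod.ext rfl (show j - 1 + 1 = j by omega)]
      exact hαν
  have hXnotA : ¬ ν.IsAddableCorner (i, j + 1) := by
    rw [yd_addable_iff]
    rintro ⟨-, h2⟩
    exact hαν (h2 (i, j) (Prod.mk_le_mk.mpr ⟨le_rfl, by omega⟩)
      (fun h => by have := congrArg Prod.snd h; simp only at this; omega))
  have hYnotA : ¬ ν.IsAddableCorner (i + 1, j) := by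
    rw [yd_addable_iff]
    rintro ⟨-, h2⟩
    exact hαν (h2 (i, j) (Prod.mk_le_mk.mpr ⟨by omega, le_rfl⟩)
      (fun h => by have := congrArg Prod.fst h; simp only at this; omega))
  have hανR : ¬ ν.IsRemovableCorner (i, j) := fun h => hαν h.1
  -- nonvanishing
  have hne0 : ∀ z : ℤ, (X : RatFunc ℚ) - (z : RatFunc ℚ) ≠ 0 := by
    intro z
    have heq : (X : RatFunc ℚ) - (z : RatFunc ℚ) =
        algebraMap (Polynomial ℚ) (RatFunc ℚ) (Polynomial.X - Polynomial.C (z : ℚ)) := by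
      rw [map_sub, RatFunc.algebraMap_X, RatFunc.algebraMap_C, map_intCast]
    rw [heq]
    exact RatFunc.algebraMap_ne_zero (Polynomial.X_sub_C_ne_zero _)
  have hprodne : ∀ S : Set (ℕ × ℕ), S.Finite →
      (∏ᶠ c ∈ S, (X - (cellContent c : RatFunc ℚ))) ≠ 0 := by
    intro S hS
    rw [finprod_mem_eq_finite_toFinset_prod _ hS]
    exact Finset.prod_ne_zero_iff.mpr fun c _ => hne0 _
  -- sets
  have hAνfin : {c | ν.IsAddableCorner c}.Finite := yd_addable_finite ν
  have hRνfin : {c | ν.IsRemovableCorner c}.Finite := yd_removable_finite ν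
  have hSxfin : {c : ℕ × ℕ | (i = 0 ∨ (i - 1, j + 1) ∈ ν) ∧ c = (i, j + 1)}.Finite :=
    (Set.finite_singleton _).subset (fun c hc => hc.2)
  have hSyfin : {c : ℕ × ℕ | (j = 0 ∨ (i + 1, j - 1) ∈ ν) ∧ c = (i + 1, j)}.Finite :=
    (Set.finite_singleton _).subset (fun c hc => hc.2)
  have hSufin : {c : ℕ × ℕ | ¬(i = 0 ∨ (i - 1, j + 1) ∈ ν) ∧ c = (i - 1, j)}.Finite :=
    (Set.finite_singleton _).subset (fun c hc => hc.2)
  have hSlfin : {c : ℕ × ℕ | ¬(j = 0 ∨ (i + 1, j - 1) ∈ ν) ∧ c = (i, j - 1)}.Finite :=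
    (Set.finite_singleton _).subset (fun c hc => hc.2)
  -- set decompositions
  have hAset : {c | lam.IsAddableCorner c} =
      (({c | ν.IsAddableCorner c} \ {(i, j)} ∪
        {c : ℕ × ℕ | (i = 0 ∨ (i - 1, j + 1) ∈ ν) ∧ c = (i, j + 1)}) ∪
        {c : ℕ × ℕ | (j = 0 ∨ (i + 1, j - 1) ∈ ν) ∧ c = (i + 1, j)}) := by
    ext c
    simp only [Set.mem_union, Set.mem_diff, Set.mem_singleton_iff, Set.mem_setOf_eq]
    rw [hAlam c]
    constructor
    · rintro (h | h | h)
      · exact Or.inl (Or.inl h)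
      · exact Or.inl (Or.inr h)
      · exact Or.inr h
    · rintro ((h | h) | h)
      · exact Or.inl h
      · exact Or.inr (Or.inl h)
      · exact Or.inr (Or.inr h)
  have hAνset : {c | ν.IsAddableCorner c} =
      ({c | ν.IsAddableCorner c} \ {(i, j)}) ∪ {(i, j)} := by
    ext c
    simp only [Set.mem_union, Set.mem_diff, Set.mem_singleton_iff, Set.mem_setOf_eq]
    constructor
    · intro hc
      by_cases h : c = (i, j)
      · exact Or.inr h
      · exact Or.inl ⟨hc, h⟩
    · rintro (⟨hc, -⟩ | rfl)
      · exact hc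
      · exact hαA
  have hRlset : {c | lam.IsRemovableCorner c} =
      ({c | ν.IsRemovableCorner c} \ {(i - 1, j), (i, j - 1)}) ∪ {(i, j)} := by
    ext c
    simp only [Set.mem_union, Set.mem_diff, Set.mem_singleton_iff, Set.mem_insert_iff,
      Set.mem_setOf_eq]
    rw [hRlam c]
    constructor
    · rintro (h | ⟨h1, h2, h3⟩)
      · exact Or.inr h
      · exact Or.inl ⟨h1, by rintro (h | h); exacts [h2 h, h3 h]⟩
    · rintro (⟨h1, h2⟩ | h)
      · exact Or.inr ⟨h1, fun h => h2 (Or.inl h), fun h => h2 (Or.inr h)⟩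
      · exact Or.inl h
  have hRνset : {c | ν.IsRemovableCorner c} =
      ((({c | ν.IsRemovableCorner c} \ {(i - 1, j), (i, j - 1)}) ∪
        {c : ℕ × ℕ | ¬(i = 0 ∨ (i - 1, j + 1) ∈ ν) ∧ c = (i - 1, j)}) ∪
        {c : ℕ × ℕ | ¬(j = 0 ∨ (i + 1, j - 1) ∈ ν) ∧ c = (i, j - 1)}) := by
    ext c
    simp only [Set.mem_union, Set.mem_diff, Set.mem_singleton_iff, Set.mem_insert_iff,
      Set.mem_setOf_eq]
    constructor
    · intro hc
      by_cases hcu : c = (i - 1, j)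
      · subst hcu
        exact Or.inl (Or.inr ⟨hU.mp hc, rfl⟩)
      · by_cases hcl : c = (i, j - 1)
        · subst hcl
          exact Or.inr ⟨hL.mp hc, rfl⟩
        · refine Or.inl (Or.inl ⟨hc, fun hmem => ?_⟩)
          rcases hmem with h | h
          · exact hcu h
          · exact hcl h
    · rintro ((⟨h, -⟩ | ⟨h, rfl⟩) | ⟨h, rfl⟩)
      · exact h
      · exact hU.mpr h
      · exact hL.mpr h
  -- disjointness
  have hXY : ((i + 1, j) : ℕ × ℕ) ≠ (i, j + 1) := fun h => by
    have := congrArg Prod.fst h; simp only at this; omega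
  have hd1 : Disjoint ({c | ν.IsAddableCorner c} \ {(i, j)})
      {c : ℕ × ℕ | (i = 0 ∨ (i - 1, j + 1) ∈ ν) ∧ c = (i, j + 1)} := by
    rw [Set.disjoint_right]
    rintro c ⟨-, rfl⟩ ⟨hc, -⟩
    exact hXnotA hc
  have hd2 : Disjoint ({c | ν.IsAddableCorner c} \ {(i, j)} ∪
      {c : ℕ × ℕ | (i = 0 ∨ (i - 1, j + 1) ∈ ν) ∧ c = (i, j + 1)})
      {c : ℕ × ℕ | (j = 0 ∨ (i + 1, j - 1) ∈ ν) ∧ c = (i + 1, j)} := by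
    rw [Set.disjoint_right]
    rintro c ⟨-, rfl⟩ hc
    rcases hc with ⟨hc, -⟩ | ⟨-, hc⟩
    · exact hYnotA hc
    · exact hXY hc
  have hd3 : Disjoint ({c | ν.IsAddableCorner c} \ {(i, j)}) ({(i, j)} : Set (ℕ × ℕ)) := by
    rw [Set.disjoint_right]
    rintro c rfl ⟨-, h⟩
    exact h rfl
  have hd4 : Disjoint ({c | ν.IsRemovableCorner c} \ {(i - 1, j), (i, j - 1)})
      ({(i, j)} : Set (ℕ × ℕ)) := by
    rw [Set.disjoint_right]
    rintro c rfl ⟨h, -⟩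
    exact hανR h
  have hd5 : Disjoint ({c | ν.IsRemovableCorner c} \ {(i - 1, j), (i, j - 1)})
      {c : ℕ × ℕ | ¬(i = 0 ∨ (i - 1, j + 1) ∈ ν) ∧ c = (i - 1, j)} := by
    rw [Set.disjoint_right]
    rintro c ⟨-, rfl⟩ ⟨-, h⟩
    exact h (Set.mem_insert _ _)
  have hd6 : Disjoint (({c | ν.IsRemovableCorner c} \ {(i - 1, j), (i, j - 1)}) ∪
      {c : ℕ × ℕ | ¬(i = 0 ∨ (i - 1, j + 1) ∈ ν) ∧ c = (i - 1, j)})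
      {c : ℕ × ℕ | ¬(j = 0 ∨ (i + 1, j - 1) ∈ ν) ∧ c = (i, j - 1)} := by
    rw [Set.disjoint_right]
    rintro c ⟨hcy, rfl⟩ hc
    rcases hc with ⟨-, h⟩ | ⟨hcx, h⟩
    · exact h (Set.mem_insert_of_mem _ rfl)
    · have hi : i ≠ 0 := fun h0 => hcx (Or.inl h0)
      have hj : j ≠ 0 := fun h0 => hcy (Or.inl h0)
      have e1 : i = i - 1 := congrArg Prod.fst h
      omega
  -- product decompositions
  have step1 : (∏ᶠ c ∈ {c | lam.IsAddableCorner c}, (X - (cellContent c : RatFunc ℚ))) =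
      (((∏ᶠ c ∈ {c | ν.IsAddableCorner c} \ {(i, j)}, (X - (cellContent c : RatFunc ℚ))) *
        ∏ᶠ c ∈ {c : ℕ × ℕ | (i = 0 ∨ (i - 1, j + 1) ∈ ν) ∧ c = (i, j + 1)},
          (X - (cellContent c : RatFunc ℚ))) *
        ∏ᶠ c ∈ {c : ℕ × ℕ | (j = 0 ∨ (i + 1, j - 1) ∈ ν) ∧ c = (i + 1, j)},
          (X - (cellContent c : RatFunc ℚ))) := by
    rw [hAset, finprod_mem_union hd2 ((hAνfin.diff).union hSxfin) hSyfin,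
      finprod_mem_union hd1 (hAνfin.diff) hSxfin]
  have step2 : (∏ᶠ c ∈ {c | ν.IsAddableCorner c}, (X - (cellContent c : RatFunc ℚ))) =
      (∏ᶠ c ∈ {c | ν.IsAddableCorner c} \ {(i, j)}, (X - (cellContent c : RatFunc ℚ))) *
        (X - (cellContent (i, j) : RatFunc ℚ)) := by
    conv_lhs => rw [hAνset]
    rw [finprod_mem_union hd3 (hAνfin.diff) (Set.finite_singleton _),
      finprod_mem_singleton]
  have step3 : (∏ᶠ c ∈ {c | lam.IsRemovableCorner c}, (X - (cellContent c : RatFunc ℚ))) =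
      (∏ᶠ c ∈ {c | ν.IsRemovableCorner c} \ {(i - 1, j), (i, j - 1)},
        (X - (cellContent c : RatFunc ℚ))) * (X - (cellContent (i, j) : RatFunc ℚ)) := by
    rw [hRlset, finprod_mem_union hd4 (hRνfin.diff) (Set.finite_singleton _),
      finprod_mem_singleton]
  have step4 : (∏ᶠ c ∈ {c | ν.IsRemovableCorner c}, (X - (cellContent c : RatFunc ℚ))) =
      (((∏ᶠ c ∈ {c | ν.IsRemovableCorner c} \ {(i - 1, j), (i, j - 1)},
          (X - (cellContent c : RatFunc ℚ))) *
        ∏ᶠ c ∈ {c : ℕ × ℕ | ¬(i = 0 ∨ (i - 1, j + 1) ∈ ν) ∧ c = (i - 1, j)},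
          (X - (cellContent c : RatFunc ℚ))) *
        ∏ᶠ c ∈ {c : ℕ × ℕ | ¬(j = 0 ∨ (i + 1, j - 1) ∈ ν) ∧ c = (i, j - 1)},
          (X - (cellContent c : RatFunc ℚ))) := by
    conv_lhs => rw [hRνset]
    rw [finprod_mem_union hd6 ((hRνfin.diff).union hSufin) hSlfin,
      finprod_mem_union hd5 (hRνfin.diff) hSufin]
  -- content computations
  have hcX' : (cellContent (i, j + 1) : RatFunc ℚ) = (cellContent (i, j) : RatFunc ℚ) + 1 := by
    have h : cellContent (i, j + 1) = cellContent (i, j) + 1 := by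
      simp only [cellContent]; push_cast; ring
    rw [h]; push_cast; ring
  have hcY' : (cellContent (i + 1, j) : RatFunc ℚ) = (cellContent (i, j) : RatFunc ℚ) - 1 := by
    have h : cellContent (i + 1, j) = cellContent (i, j) - 1 := by
      simp only [cellContent]; push_cast; ring
    rw [h]; push_cast; ring
  have hcU' : i ≠ 0 → (cellContent (i - 1, j) : RatFunc ℚ) =
      (cellContent (i, j) : RatFunc ℚ) + 1 := by
    intro hi
    have h : cellContent (i - 1, j) = cellContent (i, j) + 1 := by
      simp only [cellContent]; omega
    rw [h]; push_cast; ring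
  have hcL' : j ≠ 0 → (cellContent (i, j - 1) : RatFunc ℚ) =
      (cellContent (i, j) : RatFunc ℚ) - 1 := by
    intro hj
    have h : cellContent (i, j - 1) = cellContent (i, j) - 1 := by
      simp only [cellContent]; omega
    rw [h]; push_cast; ring
  have hPRne : (∏ᶠ c ∈ {c | ν.IsRemovableCorner c} \ {(i - 1, j), (i, j - 1)},
      (X - (cellContent c : RatFunc ℚ))) ≠ 0 := hprodne _ (hRνfin.diff)
  have ha0 : (X : RatFunc ℚ) - (cellContent (i, j) : RatFunc ℚ) ≠ 0 := hne0 _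
  have ha1 : (X : RatFunc ℚ) - (cellContent (i, j) : RatFunc ℚ) - 1 ≠ 0 := by
    have h := hne0 (cellContent (i, j) + 1)
    push_cast at h
    intro hc
    apply h
    rw [← hc]; ring
  have ha2 : (X : RatFunc ℚ) - (cellContent (i, j) : RatFunc ℚ) + 1 ≠ 0 := by
    have h := hne0 (cellContent (i, j) - 1)
    push_cast at h
    intro hc
    apply h
    rw [← hc]; ring
  have hb1 : (X : RatFunc ℚ) - ((cellContent (i, j) : RatFunc ℚ) + 1) ≠ 0 := fun h =>
    ha1 (by rw [show (X : RatFunc ℚ) - (cellContent (i, j) : RatFunc ℚ) - 1 =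
      X - ((cellContent (i, j) : RatFunc ℚ) + 1) from by ring, h])
  have hb2 : (X : RatFunc ℚ) - ((cellContent (i, j) : RatFunc ℚ) - 1) ≠ 0 := fun h =>
    ha2 (by rw [show (X : RatFunc ℚ) - (cellContent (i, j) : RatFunc ℚ) + 1 =
      X - ((cellContent (i, j) : RatFunc ℚ) - 1) from by ring, h])
  rw [step1, step2, step3, step4]
  rcases Classical.em (i = 0 ∨ (i - 1, j + 1) ∈ ν) with hx | hx <;>
    rcases Classical.em (j = 0 ∨ (i + 1, j - 1) ∈ ν) with hy | hy
  · have ex : (∏ᶠ c ∈ {c : ℕ × ℕ | (i = 0 ∨ (i - 1, j + 1) ∈ ν) ∧ c = (i, j + 1)},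
        (X - (cellContent c : RatFunc ℚ))) = X - (cellContent (i, j + 1) : RatFunc ℚ) := by
      rw [show {c : ℕ × ℕ | (i = 0 ∨ (i - 1, j + 1) ∈ ν) ∧ c = (i, j + 1)} =
          {((i, j + 1) : ℕ × ℕ)} from by
        ext c
        simp only [Set.mem_setOf_eq, Set.mem_singleton_iff]
        exact ⟨fun h => h.2, fun h => ⟨hx, h⟩⟩]
      exact finprod_mem_singleton
    have ey : (∏ᶠ c ∈ {c : ℕ × ℕ | (j = 0 ∨ (i + 1, j - 1) ∈ ν) ∧ c = (i + 1, j)},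
        (X - (cellContent c : RatFunc ℚ))) = X - (cellContent (i + 1, j) : RatFunc ℚ) := by
      rw [show {c : ℕ × ℕ | (j = 0 ∨ (i + 1, j - 1) ∈ ν) ∧ c = (i + 1, j)} =
          {((i + 1, j) : ℕ × ℕ)} from by
        ext c
        simp only [Set.mem_setOf_eq, Set.mem_singleton_iff]
        exact ⟨fun h => h.2, fun h => ⟨hy, h⟩⟩]
      exact finprod_mem_singleton
    have eu : (∏ᶠ c ∈ {c : ℕ × ℕ | ¬(i = 0 ∨ (i - 1, j + 1) ∈ ν) ∧ c = (i - 1, j)},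
        (X - (cellContent c : RatFunc ℚ))) = 1 := by
      rw [show {c : ℕ × ℕ | ¬(i = 0 ∨ (i - 1, j + 1) ∈ ν) ∧ c = (i - 1, j)} =
          (∅ : Set (ℕ × ℕ)) from by
        ext c
        simp only [Set.mem_setOf_eq, Set.mem_empty_iff_false, iff_false, not_and]
        exact fun h => absurd hx h]
      exact finprod_mem_empty
    have el : (∏ᶠ c ∈ {c : ℕ × ℕ | ¬(j = 0 ∨ (i + 1, j - 1) ∈ ν) ∧ c = (i, j - 1)},
        (X - (cellContent c : RatFunc ℚ))) = 1 := by
      rw [show {c : ℕ × ℕ | ¬(j = 0 ∨ (i + 1, j - 1) ∈ ν) ∧ c = (i, j - 1)} =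
          (∅ : Set (ℕ × ℕ)) from by
        ext c
        simp only [Set.mem_setOf_eq, Set.mem_empty_iff_false, iff_false, not_and]
        exact fun h => absurd hy h]
      exact finprod_mem_empty
    rw [ex, ey, eu, el, hcX', hcY']
    rw [div_mul_div_comm, div_eq_div_iff
      (by (repeat' apply mul_ne_zero) <;>
        first
          | exact hPRne
          | exact ha0
          | exact hb1
          | exact hb2
          | exact one_ne_zero
          | exact pow_ne_zero 2 ha0)
      (by (repeat' apply mul_ne_zero) <;>
        first
          | exact hPRne
          | exact ha0
          | exact hb1
          | exact hb2
          | exact one_ne_zero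
          | exact pow_ne_zero 2 ha0)]
    ring
  · have ex : (∏ᶠ c ∈ {c : ℕ × ℕ | (i = 0 ∨ (i - 1, j + 1) ∈ ν) ∧ c = (i, j + 1)},
        (X - (cellContent c : RatFunc ℚ))) = X - (cellContent (i, j + 1) : RatFunc ℚ) := by
      rw [show {c : ℕ × ℕ | (i = 0 ∨ (i - 1, j + 1) ∈ ν) ∧ c = (i, j + 1)} =
          {((i, j + 1) : ℕ × ℕ)} from by
        ext c
        simp only [Set.mem_setOf_eq, Set.mem_singleton_iff]
        exact ⟨fun h => h.2, fun h => ⟨hx, h⟩⟩]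
      exact finprod_mem_singleton
    have ey : (∏ᶠ c ∈ {c : ℕ × ℕ | (j = 0 ∨ (i + 1, j - 1) ∈ ν) ∧ c = (i + 1, j)},
        (X - (cellContent c : RatFunc ℚ))) = 1 := by
      rw [show {c : ℕ × ℕ | (j = 0 ∨ (i + 1, j - 1) ∈ ν) ∧ c = (i + 1, j)} =
          (∅ : Set (ℕ × ℕ)) from by
        ext c
        simp only [Set.mem_setOf_eq, Set.mem_empty_iff_false, iff_false, not_and]
        exact fun h => absurd h hy]
      exact finprod_mem_empty
    have eu : (∏ᶠ c ∈ {c : ℕ × ℕ | ¬(i = 0 ∨ (i - 1, j + 1) ∈ ν) ∧ c = (i - 1, j)},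
        (X - (cellContent c : RatFunc ℚ))) = 1 := by
      rw [show {c : ℕ × ℕ | ¬(i = 0 ∨ (i - 1, j + 1) ∈ ν) ∧ c = (i - 1, j)} =
          (∅ : Set (ℕ × ℕ)) from by
        ext c
        simp only [Set.mem_setOf_eq, Set.mem_empty_iff_false, iff_false, not_and]
        exact fun h => absurd hx h]
      exact finprod_mem_empty
    have el : (∏ᶠ c ∈ {c : ℕ × ℕ | ¬(j = 0 ∨ (i + 1, j - 1) ∈ ν) ∧ c = (i, j - 1)},
        (X - (cellContent c : RatFunc ℚ))) = X - (cellContent (i, j - 1) : RatFunc ℚ) := by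
      rw [show {c : ℕ × ℕ | ¬(j = 0 ∨ (i + 1, j - 1) ∈ ν) ∧ c = (i, j - 1)} =
          {((i, j - 1) : ℕ × ℕ)} from by
        ext c
        simp only [Set.mem_setOf_eq, Set.mem_singleton_iff]
        exact ⟨fun h => h.2, fun h => ⟨hy, h⟩⟩]
      exact finprod_mem_singleton
    have hj : j ≠ 0 := fun h0 => hy (Or.inl h0)
    rw [ex, ey, eu, el, hcX', hcL' hj]
    rw [div_mul_div_comm, div_eq_div_iff
      (by (repeat' apply mul_ne_zero) <;>
        first
          | exact hPRne
          | exact ha0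
          | exact hb1
          | exact hb2
          | exact one_ne_zero
          | exact pow_ne_zero 2 ha0)
      (by (repeat' apply mul_ne_zero) <;>
        first
          | exact hPRne
          | exact ha0
          | exact hb1
          | exact hb2
          | exact one_ne_zero
          | exact pow_ne_zero 2 ha0)]
    ring
  · have ex : (∏ᶠ c ∈ {c : ℕ × ℕ | (i = 0 ∨ (i - 1, j + 1) ∈ ν) ∧ c = (i, j + 1)},
        (X - (cellContent c : RatFunc ℚ))) = 1 := by
      rw [show {c : ℕ × ℕ | (i = 0 ∨ (i - 1, j + 1) ∈ ν) ∧ c = (i, j + 1)} =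
          (∅ : Set (ℕ × ℕ)) from by
        ext c
        simp only [Set.mem_setOf_eq, Set.mem_empty_iff_false, iff_false, not_and]
        exact fun h => absurd h hx]
      exact finprod_mem_empty
    have ey : (∏ᶠ c ∈ {c : ℕ × ℕ | (j = 0 ∨ (i + 1, j - 1) ∈ ν) ∧ c = (i + 1, j)},
        (X - (cellContent c : RatFunc ℚ))) = X - (cellContent (i + 1, j) : RatFunc ℚ) := by
      rw [show {c : ℕ × ℕ | (j = 0 ∨ (i + 1, j - 1) ∈ ν) ∧ c = (i + 1, j)} =
          {((i + 1, j) : ℕ × ℕ)} from by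
        ext c
        simp only [Set.mem_setOf_eq, Set.mem_singleton_iff]
        exact ⟨fun h => h.2, fun h => ⟨hy, h⟩⟩]
      exact finprod_mem_singleton
    have eu : (∏ᶠ c ∈ {c : ℕ × ℕ | ¬(i = 0 ∨ (i - 1, j + 1) ∈ ν) ∧ c = (i - 1, j)},
        (X - (cellContent c : RatFunc ℚ))) = X - (cellContent (i - 1, j) : RatFunc ℚ) := by
      rw [show {c : ℕ × ℕ | ¬(i = 0 ∨ (i - 1, j + 1) ∈ ν) ∧ c = (i - 1, j)} =
          {((i - 1, j) : ℕ × ℕ)} from by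
        ext c
        simp only [Set.mem_setOf_eq, Set.mem_singleton_iff]
        exact ⟨fun h => h.2, fun h => ⟨hx, h⟩⟩]
      exact finprod_mem_singleton
    have el : (∏ᶠ c ∈ {c : ℕ × ℕ | ¬(j = 0 ∨ (i + 1, j - 1) ∈ ν) ∧ c = (i, j - 1)},
        (X - (cellContent c : RatFunc ℚ))) = 1 := by
      rw [show {c : ℕ × ℕ | ¬(j = 0 ∨ (i + 1, j - 1) ∈ ν) ∧ c = (i, j - 1)} =
          (∅ : Set (ℕ × ℕ)) from by
        ext c
        simp only [Set.mem_setOf_eq, Set.mem_empty_iff_false, iff_false, not_and]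
        exact fun h => absurd hy h]
      exact finprod_mem_empty
    have hi : i ≠ 0 := fun h0 => hx (Or.inl h0)
    rw [ex, ey, eu, el, hcY', hcU' hi]
    rw [div_mul_div_comm, div_eq_div_iff
      (by (repeat' apply mul_ne_zero) <;>
        first
          | exact hPRne
          | exact ha0
          | exact hb1
          | exact hb2
          | exact one_ne_zero
          | exact pow_ne_zero 2 ha0)
      (by (repeat' apply mul_ne_zero) <;>
        first
          | exact hPRne
          | exact ha0
          | exact hb1
          | exact hb2
          | exact one_ne_zero
          | exact pow_ne_zero 2 ha0)]
    ring
  · have ex : (∏ᶠ c ∈ {c : ℕ × ℕ | (i = 0 ∨ (i - 1, j + 1) ∈ ν) ∧ c = (i, j + 1)},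
        (X - (cellContent c : RatFunc ℚ))) = 1 := by
      rw [show {c : ℕ × ℕ | (i = 0 ∨ (i - 1, j + 1) ∈ ν) ∧ c = (i, j + 1)} =
          (∅ : Set (ℕ × ℕ)) from by
        ext c
        simp only [Set.mem_setOf_eq, Set.mem_empty_iff_false, iff_false, not_and]
        exact fun h => absurd h hx]
      exact finprod_mem_empty
    have ey : (∏ᶠ c ∈ {c : ℕ × ℕ | (j = 0 ∨ (i + 1, j - 1) ∈ ν) ∧ c = (i + 1, j)},
        (X - (cellContent c : RatFunc ℚ))) = 1 := by
      rw [show {c : ℕ × ℕ | (j = 0 ∨ (i + 1, j - 1) ∈ ν) ∧ c = (i + 1, j)} =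
          (∅ : Set (ℕ × ℕ)) from by
        ext c
        simp only [Set.mem_setOf_eq, Set.mem_empty_iff_false, iff_false, not_and]
        exact fun h => absurd h hy]
      exact finprod_mem_empty
    have eu : (∏ᶠ c ∈ {c : ℕ × ℕ | ¬(i = 0 ∨ (i - 1, j + 1) ∈ ν) ∧ c = (i - 1, j)},
        (X - (cellContent c : RatFunc ℚ))) = X - (cellContent (i - 1, j) : RatFunc ℚ) := by
      rw [show {c : ℕ × ℕ | ¬(i = 0 ∨ (i - 1, j + 1) ∈ ν) ∧ c = (i - 1, j)} =
          {((i - 1, j) : ℕ × ℕ)} from by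
        ext c
        simp only [Set.mem_setOf_eq, Set.mem_singleton_iff]
        exact ⟨fun h => h.2, fun h => ⟨hx, h⟩⟩]
      exact finprod_mem_singleton
    have el : (∏ᶠ c ∈ {c : ℕ × ℕ | ¬(j = 0 ∨ (i + 1, j - 1) ∈ ν) ∧ c = (i, j - 1)},
        (X - (cellContent c : RatFunc ℚ))) = X - (cellContent (i, j - 1) : RatFunc ℚ) := by
      rw [show {c : ℕ × ℕ | ¬(j = 0 ∨ (i + 1, j - 1) ∈ ν) ∧ c = (i, j - 1)} =
          {((i, j - 1) : ℕ × ℕ)} from by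
        ext c
        simp only [Set.mem_setOf_eq, Set.mem_singleton_iff]
        exact ⟨fun h => h.2, fun h => ⟨hy, h⟩⟩]
      exact finprod_mem_singleton
    have hi : i ≠ 0 := fun h0 => hx (Or.inl h0)
    have hj : j ≠ 0 := fun h0 => hy (Or.inl h0)
    rw [ex, ey, eu, el, hcU' hi, hcL' hj]
    rw [div_mul_div_comm, div_eq_div_iff
      (by (repeat' apply mul_ne_zero) <;>
        first
          | exact hPRne
          | exact ha0
          | exact hb1
          | exact hb2
          | exact one_ne_zero
          | exact pow_ne_zero 2 ha0)
      (by (repeat' apply mul_ne_zero) <;>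
        first
          | exact hPRne
          | exact ha0
          | exact hb1
          | exact hb2
          | exact one_ne_zero
          | exact pow_ne_zero 2 ha0)]
    ring
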